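/- Fix n ∈ ℕ, k ∈ ℕ, and an integer partition n = n_1 + ⋯ + n_k with each n_i ≥ 1. Define c_0 = 0 and c_i = n_1 + ⋯ + n_i for i ≥ 1. For each i, let L_i ∈ ℝ^{n×n} be the block matrix with diagonal blocks I_{c_{i-1}} and M_i, where M_i ∈ ℝ^{(n-c_{i-1})×(n-c_{i-1})} has the ℓ∞-normalized Pascal matrix Q_{n_i} in its top-left n_i × n_i block, zeros in the remaining top rows, and the banded binomial convolution matrix B_{n-c_{i-1}, n_i} in its bottom n − c_i rows. Then Q_n = L_k L_{k-1} ⋯ L_2 L_1. -/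

import Mathlib

/-- The `ℓ∞`-normalized lower-triangular Pascal matrix:
`(Q_n)_{ij} = 2^{-i} C(i, j)` for `j ≤ i`, else `0`. -/
noncomputable def Qmat (n : ℕ) : Matrix (Fin n) (Fin n) ℝ :=
  Matrix.of fun i j =>
    if (j : ℕ) ≤ (i : ℕ) then ((2 : ℝ) ^ (i : ℕ))⁻¹ * ((i : ℕ).choose (j : ℕ) : ℝ) else 0

/-- Entry `(i, j)` of the banded binomial convolution matrix `B_{·,m}`:
`(B)_{ij} = (b_m)_{j-i} = 2^{-m} C(m, j-i)` if `0 ≤ j - i ≤ m`, else `0`. -/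
noncomputable def Bent (m i j : ℕ) : ℝ :=
  if i ≤ j ∧ j ≤ i + m then ((2 : ℝ) ^ m)⁻¹ * (m.choose (j - i) : ℝ) else 0

/-- The `n × n` block matrix `L` with diagonal blocks `I_{cprev}` and `M`, where
`M ∈ ℝ^{(n-cprev) × (n-cprev)}` has `Q_{ni}` in its top-left `ni × ni` block, zeros in the
remaining top rows, and the banded binomial convolution matrix `B_{n-cprev, ni}` in its
bottom rows. -/
noncomputable def Lmat (n cprev ni : ℕ) : Matrix (Fin n) (Fin n) ℝ :=
  Matrix.of fun a b =>
    if (a : ℕ) < cprev ∨ (b : ℕ) < cprev then (if a = b then 1 else 0)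
    else if (a : ℕ) - cprev < ni then
      (if (b : ℕ) - cprev ≤ (a : ℕ) - cprev then
        ((2 : ℝ) ^ ((a : ℕ) - cprev))⁻¹ * (((a : ℕ) - cprev).choose ((b : ℕ) - cprev) : ℝ)
      else 0)
    else Bent ni ((a : ℕ) - cprev - ni) ((b : ℕ) - cprev)

/-- `c_i = n_1 + ⋯ + n_i`, the partial sums of the partition `nf 1, nf 2, …`. -/
def csum (nf : ℕ → ℕ) (i : ℕ) : ℕ := ∑ j ∈ Finset.range i, nf (j + 1)

/-! ### Auxiliary definitions and lemmas -/

/-- Unnormalized entry helper. -/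
noncomputable def Pe (i j : ℕ) : ℝ := ((2 : ℝ) ^ i)⁻¹ * (i.choose j : ℝ)

lemma Pe_if (i j : ℕ) :
    (if j ≤ i then ((2 : ℝ) ^ i)⁻¹ * (i.choose j : ℝ) else 0) = Pe i j := by
  unfold Pe
  split_ifs with h
  · rfl
  · rw [Nat.choose_eq_zero_of_lt (lt_of_not_ge h)]; simp

lemma Bent_eq (m i j : ℕ) :
    Bent m i j = if i ≤ j then ((2 : ℝ) ^ m)⁻¹ * (m.choose (j - i) : ℝ) else 0 := by
  unfold Bent
  by_cases h1 : i ≤ j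
  · by_cases h2 : j ≤ i + m
    · rw [if_pos ⟨h1, h2⟩, if_pos h1]
    · rw [if_neg (by tauto), if_pos h1, Nat.choose_eq_zero_of_lt (by omega)]
      simp
  · rw [if_neg (by tauto), if_neg h1]

/-- Truncated Vandermonde sum. -/
lemma vand_sum (r c b N : ℕ) (hr : r < N) :
    ∑ s ∈ Finset.range N, (if s ≤ b then (r.choose s : ℝ) * (c.choose (b - s) : ℝ) else 0)
      = ((r + c).choose b : ℝ) := by
  set f : ℕ → ℝ := fun s => if s ≤ b then (r.choose s : ℝ) * (c.choose (b - s) : ℝ) else 0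
    with hf
  have hzero : ∀ s, r < s → f s = 0 := by
    intro s hs
    simp only [hf]
    split_ifs with h
    · rw [Nat.choose_eq_zero_of_lt hs]; simp
    · rfl
  have h1 : ∑ s ∈ Finset.range N, f s = ∑ s ∈ Finset.range (max N (b + 1)), f s := by
    refine Finset.sum_subset (Finset.range_subset_range.2 (le_max_left _ _)) ?_
    intro s _ hs
    exact hzero s (by simp only [Finset.mem_range, not_lt] at hs; omega)
  have h2 : ∑ s ∈ Finset.range (b + 1), f s = ∑ s ∈ Finset.range (max N (b + 1)), f s := by
    refine Finset.sum_subset (Finset.range_subset_range.2 (le_max_right _ _)) ?_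
    intro s _ hs
    simp only [Finset.mem_range, not_lt] at hs
    simp only [hf]
    rw [if_neg (by omega)]
  rw [h1, ← h2]
  have h3 : ∑ s ∈ Finset.range (b + 1), f s
      = ∑ s ∈ Finset.range (b + 1), (r.choose s : ℝ) * (c.choose (b - s) : ℝ) := by
    refine Finset.sum_congr rfl fun s hs => ?_
    simp only [Finset.mem_range] at hs
    simp only [hf]
    rw [if_pos (by omega)]
  rw [h3]
  rw [Nat.add_choose_eq r c b, Finset.Nat.sum_antidiagonal_eq_sum_range_succ_mk,
    Nat.cast_sum]
  refine Finset.sum_congr rfl fun s _ => ?_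
  push_cast
  ring

/-- Intermediate matrix: top `c` rows are normalized Pascal rows, bottom rows are the
banded binomial matrix `B_{·,c}`. -/
noncomputable def Tmat (n c : ℕ) : Matrix (Fin n) (Fin n) ℝ :=
  Matrix.of fun a b =>
    if (a : ℕ) < c then
      (if (b : ℕ) ≤ (a : ℕ) then ((2 : ℝ) ^ (a : ℕ))⁻¹ * ((a : ℕ).choose (b : ℕ) : ℝ) else 0)
    else Bent c ((a : ℕ) - c) (b : ℕ)

lemma Tmat_zero (n : ℕ) : Tmat n 0 = 1 := by
  ext a b
  simp only [Tmat, Matrix.of_apply, Nat.not_lt_zero, if_false, Nat.sub_zero, Bent_eq,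
    Matrix.one_apply]
  by_cases h : (a : ℕ) ≤ (b : ℕ)
  · rw [if_pos h]
    by_cases h2 : a = b
    · rw [if_pos h2]
      have : (b : ℕ) - (a : ℕ) = 0 := by omega
      simp [this]
    · rw [if_neg h2]
      have hne : (a : ℕ) ≠ (b : ℕ) := fun hh => h2 (Fin.ext hh)
      rw [Nat.choose_eq_zero_of_lt (by omega)]
      simp
  · rw [if_neg h, if_neg (fun h2 => h (le_of_eq (congrArg Fin.val h2)))]

lemma Tmat_top (n : ℕ) : Tmat n n = Qmat n := by
  ext a b
  simp only [Tmat, Qmat, Matrix.of_apply]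
  rw [if_pos a.isLt]

/-- Key step: multiplying the intermediate matrix by one block factor. -/
lemma step (n c m : ℕ) (hcm : c + m ≤ n) :
    Lmat n c m * Tmat n c = Tmat n (c + m) := by
  ext a b
  rw [Matrix.mul_apply]
  by_cases hac : (a : ℕ) < c
  · -- identity row
    have h0 : ∀ x : Fin n, Lmat n c m a x * Tmat n c x b
        = (if a = x then 1 else 0) * Tmat n c x b := by
      intro x
      simp only [Lmat, Matrix.of_apply]
      rw [if_pos (Or.inl hac)]
    rw [Finset.sum_congr rfl fun x _ => h0 x]
    simp only [ite_mul, one_mul, zero_mul, Finset.sum_ite_eq, Finset.mem_univ, if_pos]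
    simp only [Tmat, Matrix.of_apply]
    rw [if_pos hac, if_pos (show (a : ℕ) < c + m by omega)]
  · -- non-identity rows
    push_neg at hac
    have hAn : (a : ℕ) < n := a.isLt
    have key : ∀ x : Fin n, Lmat n c m a x * Tmat n c x b
        = (if (x : ℕ) < c then 0
          else (if (a : ℕ) - c < m then Pe ((a : ℕ) - c) ((x : ℕ) - c)
            else Bent m ((a : ℕ) - c - m) ((x : ℕ) - c)) * Bent c ((x : ℕ) - c) (b : ℕ)) := by
      intro x
      simp only [Lmat, Tmat, Matrix.of_apply]
      by_cases hx : (x : ℕ) < c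
      · rw [if_pos (Or.inr hx), if_pos hx]
        have hne : a ≠ x := fun h => by rw [h] at hac; omega
        rw [if_neg hne, if_pos hx, zero_mul]
      · rw [if_neg (by omega : ¬((a : ℕ) < c ∨ (x : ℕ) < c)), if_neg hx, if_neg hx]
        by_cases h1 : (a : ℕ) - c < m
        · rw [if_pos h1, if_pos h1, Pe_if]
        · rw [if_neg h1, if_neg h1]
    rw [Finset.sum_congr rfl fun x _ => key x]
    have hsum : (∑ x : Fin n, (if (x : ℕ) < c then 0
        else (if (a : ℕ) - c < m then Pe ((a : ℕ) - c) ((x : ℕ) - c)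
          else Bent m ((a : ℕ) - c - m) ((x : ℕ) - c)) * Bent c ((x : ℕ) - c) (b : ℕ)))
        = ∑ s ∈ Finset.range (n - c),
            (if (a : ℕ) - c < m then Pe ((a : ℕ) - c) s
              else Bent m ((a : ℕ) - c - m) s) * Bent c s (b : ℕ) := by
      rw [Fin.sum_univ_eq_sum_range (fun X => if X < c then 0
        else (if (a : ℕ) - c < m then Pe ((a : ℕ) - c) (X - c)
          else Bent m ((a : ℕ) - c - m) (X - c)) * Bent c (X - c) (b : ℕ)) n]
      rw [show Finset.range n = Finset.range (c + (n - c)) from by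
        congr 1; omega]
      rw [Finset.sum_range_add]
      have hz : (∑ X ∈ Finset.range c, (if X < c then (0 : ℝ)
          else (if (a : ℕ) - c < m then Pe ((a : ℕ) - c) (X - c)
            else Bent m ((a : ℕ) - c - m) (X - c)) * Bent c (X - c) (b : ℕ))) = 0 := by
        refine Finset.sum_eq_zero fun X hX => ?_
        simp only [Finset.mem_range] at hX
        rw [if_pos hX]
      rw [hz, zero_add]
      refine Finset.sum_congr rfl fun s _ => ?_
      rw [if_neg (by omega : ¬ c + s < c)]
      have hs : c + s - c = s := by omega
      rw [hs]
    rw [hsum]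
    by_cases ham : (a : ℕ) - c < m
    · -- Pascal block row
      simp only [if_pos ham]
      have hrhs : Tmat n (c + m) a b
          = ((2 : ℝ) ^ (a : ℕ))⁻¹ * (((a : ℕ)).choose (b : ℕ) : ℝ) := by
        simp only [Tmat, Matrix.of_apply]
        rw [if_pos (show (a : ℕ) < c + m by omega), Pe_if]
        rfl
      rw [hrhs]
      have hterm : ∀ s ∈ Finset.range (n - c), Pe ((a : ℕ) - c) s * Bent c s (b : ℕ)
          = (((2 : ℝ) ^ ((a : ℕ) - c))⁻¹ * ((2 : ℝ) ^ c)⁻¹)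
            * (if s ≤ (b : ℕ) then (((a : ℕ) - c).choose s : ℝ)
                * (c.choose ((b : ℕ) - s) : ℝ) else 0) := by
        intro s _
        rw [Pe, Bent_eq]
        split_ifs with h
        · ring
        · ring
      rw [Finset.sum_congr rfl hterm, ← Finset.mul_sum, vand_sum _ _ _ _ (by omega)]
      have h1 : (a : ℕ) - c + c = (a : ℕ) := by omega
      rw [← mul_inv, ← pow_add, h1]
    · -- banded block row
      simp only [if_neg ham]
      push_neg at ham
      have hrhs : Tmat n (c + m) a b = Bent (c + m) ((a : ℕ) - c - m) (b : ℕ) := by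
        simp only [Tmat, Matrix.of_apply]
        rw [if_neg (by omega : ¬ (a : ℕ) < c + m)]
        congr 1
        omega
      rw [hrhs]
      by_cases htb : (a : ℕ) - c - m ≤ (b : ℕ)
      · have hsplit : n - c = ((a : ℕ) - c - m) + (n - c - ((a : ℕ) - c - m)) := by omega
        rw [hsplit, Finset.sum_range_add]
        have hz : (∑ s ∈ Finset.range ((a : ℕ) - c - m),
            Bent m ((a : ℕ) - c - m) s * Bent c s (b : ℕ)) = 0 := by
          refine Finset.sum_eq_zero fun s hs => ?_
          simp only [Finset.mem_range] at hs
          rw [Bent_eq, if_neg (by omega), zero_mul]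
        rw [hz, zero_add]
        have hterm : ∀ u ∈ Finset.range (n - c - ((a : ℕ) - c - m)),
            Bent m ((a : ℕ) - c - m) (((a : ℕ) - c - m) + u)
              * Bent c (((a : ℕ) - c - m) + u) (b : ℕ)
            = (((2 : ℝ) ^ m)⁻¹ * ((2 : ℝ) ^ c)⁻¹)
              * (if u ≤ (b : ℕ) - ((a : ℕ) - c - m) then (m.choose u : ℝ)
                  * (c.choose (((b : ℕ) - ((a : ℕ) - c - m)) - u) : ℝ) else 0) := by
          intro u _
          rw [Bent_eq, Bent_eq, if_pos (by omega)]
          have h2 : ((a : ℕ) - c - m) + u - ((a : ℕ) - c - m) = u := by omega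
          rw [h2]
          by_cases h3 : ((a : ℕ) - c - m) + u ≤ (b : ℕ)
          · rw [if_pos h3, if_pos (by omega)]
            have h4 : (b : ℕ) - (((a : ℕ) - c - m) + u) = (b : ℕ) - ((a : ℕ) - c - m) - u := by
              omega
            rw [h4]; ring
          · rw [if_neg h3, if_neg (by omega)]; ring
        rw [Finset.sum_congr rfl hterm, ← Finset.mul_sum, vand_sum _ _ _ _ (by omega)]
        rw [Bent_eq, if_pos htb, ← mul_inv, ← pow_add, Nat.add_comm m c]
      · have hz : ∀ s ∈ Finset.range (n - c),
            Bent m ((a : ℕ) - c - m) s * Bent c s (b : ℕ) = 0 := by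
          intro s _
          rw [Bent_eq, Bent_eq]
          by_cases h1 : (a : ℕ) - c - m ≤ s
          · rw [if_neg (by omega : ¬ s ≤ (b : ℕ)), mul_zero]
          · rw [if_neg h1, zero_mul]
        rw [Finset.sum_eq_zero hz, Bent_eq, if_neg htb]

/-- Multiway recursive factorization: given a partition `n = n_1 + ⋯ + n_k` with each
`n_i ≥ 1`, we have `Q_n = L_k L_{k-1} ⋯ L_2 L_1`, where `L_i` is built from `Q_{n_i}` and
`B_{n - c_{i-1}, n_i}`. -/
theorem normalized_pascal_L_factorization (n k : ℕ) (nf : ℕ → ℕ)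
    (hpos : ∀ i, 1 ≤ i → i ≤ k → 1 ≤ nf i) (hsum : csum nf k = n) :
    Qmat n = (((List.range k).reverse).map fun ℓ => Lmat n (csum nf ℓ) (nf (ℓ + 1))).prod := by
  have hmono : ∀ i, i ≤ k → csum nf i ≤ n := by
    intro i hi
    rw [← hsum]
    exact Finset.sum_le_sum_of_subset (Finset.range_subset_range.2 hi)
  have main : ∀ i, i ≤ k →
      (((List.range i).reverse).map fun ℓ => Lmat n (csum nf ℓ) (nf (ℓ + 1))).prod
        = Tmat n (csum nf i) := by
    intro i
    induction i with
    | zero => intro _; simp [csum, Tmat_zero]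
    | succ j ih =>
      intro hj
      rw [List.range_succ, List.reverse_append, List.reverse_singleton]
      simp only [List.singleton_append, List.map_cons, List.prod_cons]
      rw [ih (by omega)]
      have hc : csum nf (j + 1) = csum nf j + nf (j + 1) := by
        simp [csum, Finset.sum_range_succ]
      rw [step n (csum nf j) (nf (j + 1)) (by rw [← hc]; exact hmono _ hj), hc]
  rw [main k le_rfl, hsum, Tmat_top]
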